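/- arXiv:2004.02445 — 4 statements merged into one kernel-verified Lean document; each statement's English description precedes it below -/
import Mathlib

section
/- Let m > 2 be a real number and let C be a real number with 0 < C ≤ min(1, m − 1 − 2/m). Then for every real a ≥ 1 + m/(m−2) and every real q ≥ 0 the following hold: (i) a − q² + (m−1) q^m ≥ 1 + C q^m; (ii) (1 + 2m/C) (a − q² + (m−1) q^m) ≥ 2q + m q^{m−1}. -/
open Set Filter Topology Metric

noncomputable section

abbrev Spc (N : ℕ) := EuclideanSpace ℝ (Fin N)

/-- Spatial Laplacian of a function of space and time. -/
def pLap (N : ℕ) (φ : Spc N × ℝ → ℝ) (p : Spc N × ℝ) : ℝ :=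
  ∑ i : Fin N,
    iteratedFDeriv ℝ 2 (fun x => φ (x, p.2)) p.1
      ![EuclideanSpace.single i (1:ℝ), EuclideanSpace.single i (1:ℝ)]

/-- Spatial gradient of a function of space and time. -/
def pGrad (N : ℕ) (φ : Spc N × ℝ → ℝ) (p : Spc N × ℝ) : Spc N :=
  gradient (fun x => φ (x, p.2)) p.1

/-- Time derivative of a function of space and time. -/
def pT (N : ℕ) (φ : Spc N × ℝ → ℝ) (p : Spc N × ℝ) : ℝ :=
  deriv (fun t => φ (p.1, t)) p.2

/-- Viscosity subsolution of `u_t - Δu + |Du|^m = h(x)` in `O` (local maxima relative to `O`). -/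
def IsParabolicSubsolution (N : ℕ) (m : ℝ) (h : Spc N → ℝ) (O : Set (Spc N × ℝ))
    (u : Spc N × ℝ → ℝ) : Prop :=
  ∀ p ∈ O, ∀ φ : Spc N × ℝ → ℝ, ContDiffAt ℝ 2 φ p →
    IsLocalMaxOn (fun q => u q - φ q) O p →
    pT N φ p - pLap N φ p + ‖pGrad N φ p‖ ^ m ≤ h p.1

/-- Viscosity supersolution of `u_t - Δu + |Du|^m = h(x)` in `O` (local minima relative to `O`). -/
def IsParabolicSupersolution (N : ℕ) (m : ℝ) (h : Spc N → ℝ) (O : Set (Spc N × ℝ))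
    (u : Spc N × ℝ → ℝ) : Prop :=
  ∀ p ∈ O, ∀ φ : Spc N × ℝ → ℝ, ContDiffAt ℝ 2 φ p →
    IsLocalMinOn (fun q => u q - φ q) O p →
    h p.1 ≤ pT N φ p - pLap N φ p + ‖pGrad N φ p‖ ^ m

/-- Continuous, bounded-from-below viscosity solution of the Cauchy problem on ℝ^N × [0,∞). -/
def IsSolutionWholeSpace (N : ℕ) (m : ℝ) (f u₀ : Spc N → ℝ) (u : Spc N × ℝ → ℝ) : Prop :=
  ContinuousOn u (univ ×ˢ Ici 0) ∧ BddBelow (u '' (univ ×ˢ Ici 0)) ∧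
  IsParabolicSubsolution N m f (univ ×ˢ Ioi 0) u ∧
  IsParabolicSupersolution N m f (univ ×ˢ Ioi 0) u ∧
  ∀ x, u (x, 0) = u₀ x

/-- Laplacian of a stationary function. -/
def eLap (N : ℕ) (φ : Spc N → ℝ) (x : Spc N) : ℝ :=
  ∑ i : Fin N,
    iteratedFDeriv ℝ 2 φ x ![EuclideanSpace.single i (1:ℝ), EuclideanSpace.single i (1:ℝ)]

/-- Classical solution of the ergodic problem `λ - Δφ + |Dφ|^m = f`. -/
def IsErgodicSolution (N : ℕ) (m : ℝ) (f : Spc N → ℝ) (lam : ℝ) (φ : Spc N → ℝ) : Prop :=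
  ContDiff ℝ 2 φ ∧ ∀ x, lam - eLap N φ x + ‖gradient φ x‖ ^ m = f x

/-- Hypothesis (H1) with explicit data `g, α, g₀, f₀`. -/
def H1data (N : ℕ) (f : Spc N → ℝ) (g : ℝ → ℝ) (α g₀ f₀ : ℝ) : Prop :=
  0 < α ∧ 0 < g₀ ∧ 0 < f₀ ∧ MonotoneOn g (Ici 0) ∧ (∀ r ∈ Ici (0:ℝ), 0 ≤ g r) ∧
  (∀ r : ℝ, 0 ≤ r → g₀⁻¹ * r ^ α ≤ g r) ∧
  (∀ x : Spc N, f₀⁻¹ * g ‖x‖ - f₀ ≤ f x ∧ f x ≤ f₀ * (g ‖x‖ + 1))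

/-- Hypothesis (H1). -/
def H1 (N : ℕ) (f : Spc N → ℝ) : Prop :=
  ∃ g α g₀ f₀, H1data N f g α g₀ f₀

/-- The parabolic topology on ℝ^N × ℝ. -/
def parTop (N : ℕ) : TopologicalSpace (Spc N × ℝ) :=
  TopologicalSpace.generateFrom
    { S | ∃ (x : Spc N) (t r : ℝ), 0 < r ∧ S = Metric.ball x r ×ˢ Set.Ioc (t - r) t }

/-- Parabolically open sets. -/
def ParabolicallyOpen (N : ℕ) (Q : Set (Spc N × ℝ)) : Prop := (parTop N).IsOpen Q

/-- Parabolic closure. -/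
def pClosure (N : ℕ) (Q : Set (Spc N × ℝ)) : Set (Spc N × ℝ) := @closure _ (parTop N) Q

/-- Parabolic boundary. -/
def pFrontier (N : ℕ) (Q : Set (Spc N × ℝ)) : Set (Spc N × ℝ) := @frontier _ (parTop N) Q

theorem statement7 (m C : ℝ) (hm : 2 < m) (hC : 0 < C) (hC' : C ≤ min 1 (m - 1 - 2 / m)) :
    ∀ a q : ℝ, 1 + m / (m - 2) ≤ a → 0 ≤ q →
      1 + C * q ^ m ≤ a - q ^ (2:ℝ) + (m - 1) * q ^ m ∧
      2 * q + m * q ^ (m - 1) ≤ (1 + 2 * m / C) * (a - q ^ (2:ℝ) + (m - 1) * q ^ m) := by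
  intro a q ha hq
  have hm2 : (0:ℝ) < m - 2 := by linarith
  have hm0 : (0:ℝ) < m := by linarith
  obtain ⟨hC1, hC2⟩ := le_min_iff.mp hC'
  have hqm : 0 ≤ q ^ m := Real.rpow_nonneg hq m
  have hq2 : 0 ≤ q ^ (2:ℝ) := Real.rpow_nonneg hq 2
  -- Young: q^2 ≤ (2/m) q^m + (m-2)/m
  have hconj : Real.HolderConjugate (m/2) (m/(m-2)) := by
    rw [Real.holderConjugate_iff]
    constructor
    · rw [lt_div_iff₀ (by norm_num)]; linarith
    · rw [inv_div, inv_div]; field_simp; ring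
  have hy0 := Real.young_inequality_of_nonneg hq2 zero_le_one hconj
  rw [mul_one, ← Real.rpow_mul hq, Real.one_rpow] at hy0
  have h2m : 2 * (m/2) = m := by ring
  rw [h2m] at hy0
  have hy : q ^ (2:ℝ) ≤ 2/m * q ^ m + (m-2)/m := by
    have e1 : q ^ m / (m/2) = 2/m * q ^ m := by field_simp
    have e2 : (1:ℝ) / (m/(m-2)) = (m-2)/m := by field_simp
    rw [e1, e2] at hy0; exact hy0
  -- key bounds on constants
  have hmm : (m-2)/m ≤ m/(m-2) := by
    rw [div_le_div_iff₀ hm0 hm2]; nlinarith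
  have hC2' : 2/m ≤ m - 1 - C := by
    linarith
  have part1 : 1 + C * q ^ m ≤ a - q ^ (2:ℝ) + (m - 1) * q ^ m := by nlinarith
  refine ⟨part1, ?_⟩
  have hpos : 0 < 1 + 2 * m / C := by positivity
  have hstep : (1 + 2*m/C) * (1 + C * q ^ m) ≤ (1 + 2*m/C) * (a - q ^ (2:ℝ) + (m-1) * q ^ m) :=
    mul_le_mul_of_nonneg_left part1 hpos.le
  have hcc : 2*m/C * C = 2*m := div_mul_cancel₀ _ (ne_of_gt hC)
  refine le_trans ?_ hstep
  rcases le_total q 1 with h1 | h1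
  · have hqm1 : q ^ m ≤ 1 := Real.rpow_le_one hq h1 hm0.le
    have hqm1' : q ^ (m-1) ≤ 1 := Real.rpow_le_one hq h1 (by linarith)
    have h2mC : 2*m ≤ 2*m/C := by rw [le_div_iff₀ hC]; nlinarith
    have hq0 : 0 ≤ q ^ (m-1) := Real.rpow_nonneg hq _
    nlinarith
  · have hq1 : q ≤ q ^ m := by
      nth_rewrite 1 [← Real.rpow_one q]
      exact Real.rpow_le_rpow_of_exponent_le h1 (by linarith)
    have hq2' : q ^ (m-1) ≤ q ^ m := Real.rpow_le_rpow_of_exponent_le h1 (by linarith)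
    nlinarith
end
end

section
/- Let N ≥ 1, m > 2, and let f : ℝ^N → ℝ be continuous and satisfy hypothesis (H1). Let λ ∈ ℝ and let φ : ℝ^N → ℝ be of class C², bounded from below, and satisfy λ − Δφ(x) + |Dφ(x)|^m = f(x) for all x ∈ ℝ^N. Then φ(x)/|x| → +∞ as |x| → ∞. -/
open Set Filter Topology Metric

noncomputable section

section AuxiliaryLemmas
open RealInnerProductSpace
set_option linter.unusedSectionVars false

lemma sndDerivTest {u : ℝ → ℝ} (hu : ContDiff ℝ 2 u) (hmin : IsLocalMin u 0) :
    0 ≤ deriv (deriv u) 0 := by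
  by_contra h
  push_neg at h
  have hd1 : deriv u 0 = 0 := hmin.deriv_eq_zero
  have h2 : ContDiff ℝ 1 (deriv u) := by
    have := (contDiff_succ_iff_deriv (n := 1) (f := u)).1 (by norm_num at hu ⊢; exact hu)
    exact this.2.2
  have hdu : HasDerivAt (deriv u) (deriv (deriv u) 0) 0 :=
    ((h2.differentiable one_ne_zero) 0).hasDerivAt
  have hsl := hasDerivAt_iff_tendsto_slope.1 hdu
  have hneg : ∀ᶠ t in 𝓝[>] (0:ℝ), deriv u t < 0 := by
    have : ∀ᶠ t in 𝓝[≠] (0:ℝ), slope (deriv u) 0 t < 0 :=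
      hsl.eventually (eventually_lt_nhds h)
    filter_upwards [nhdsWithin_mono (0:ℝ) (fun t ht => ne_of_gt ht : Ioi 0 ⊆ {(0:ℝ)}ᶜ) this,
      self_mem_nhdsWithin] with t ht ht0
    have hts : slope (deriv u) 0 t = deriv u t / t := by
      simp [slope, hd1, div_eq_inv_mul]
    rw [hts] at ht
    have h3 : deriv u t = (deriv u t / t) * t := (div_mul_cancel₀ _ (ne_of_gt ht0)).symm
    nlinarith [mem_Ioi.1 ht0]
  obtain ⟨δ, hδpos, hδ⟩ : ∃ δ > 0, ∀ t ∈ Ioo (0:ℝ) δ, deriv u t < 0 := by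
    rcases (nhdsGT_basis_of_exists_gt ⟨1, by norm_num⟩).eventually_iff.1 hneg with ⟨δ', hδ', h'⟩
    exact ⟨min δ' 1, by positivity, fun t ht => h' ⟨ht.1, lt_of_lt_of_le ht.2 (min_le_left _ _)⟩⟩
  obtain ⟨ε, hεpos, hε⟩ := Metric.eventually_nhds_iff.1 hmin
  set t := min δ ε / 2 with htdef
  have htpos : 0 < t := by positivity
  have hanti : StrictAntiOn u (Icc 0 t) := by
    apply strictAntiOn_of_deriv_neg (convex_Icc _ _) (hu.continuous.continuousOn)
    intro s hs
    rw [interior_Icc] at hs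
    exact hδ s ⟨hs.1, lt_of_lt_of_le (lt_of_lt_of_le hs.2 (by rw [htdef]; linarith [min_le_left δ ε])) le_rfl⟩
  have h1 : u t < u 0 := hanti ⟨le_rfl, htpos.le⟩ ⟨htpos.le, le_rfl⟩ htpos
  have h2' : u 0 ≤ u t := hε (by simp [abs_of_pos htpos]; rw [htdef]; linarith [min_le_right δ ε])
  linarith

variable {E : Type*} [NormedAddCommGroup E] [InnerProductSpace ℝ E] [CompleteSpace E]

lemma D2test {w : E → ℝ}
    (hw : ContDiff ℝ 2 w) {y : E} (hmin : IsLocalMin w y) (v : E) :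
    0 ≤ fderiv ℝ (fderiv ℝ w) y v v := by
  set g : ℝ → E := fun t => y + t • v with hgdef
  have hg : ∀ t, HasDerivAt g v t := by
    intro t
    have : HasDerivAt (fun t : ℝ => t • v) ((1:ℝ) • v) t := (hasDerivAt_id t).smul_const v
    simpa [hgdef, one_smul] using this.const_add y
  have hg0 : g 0 = y := by simp [hgdef]
  have hgc : ContDiff ℝ 2 g := contDiff_const.add (contDiff_id.smul contDiff_const)
  have hu : ContDiff ℝ 2 (w ∘ g) := hw.comp hgc
  have hminu : IsLocalMin (w ∘ g) 0 := by
    refine IsMinFilter.comp_tendsto (show IsMinFilter w (𝓝 (g 0)) (g 0) by rw [hg0]; exact hmin) ?_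
    exact (hgc.continuous.tendsto 0)
  have hderiv : deriv (w ∘ g) = fun t => fderiv ℝ w (g t) v := by
    funext t
    exact (((hw.differentiable (by norm_num) (g t)).hasFDerivAt).comp_hasDerivAt t (hg t)).deriv
  have hF : HasFDerivAt (fderiv ℝ w) (fderiv ℝ (fderiv ℝ w) y) (g 0) := by
    rw [hg0]
    exact (((hw.fderiv_right (m := 1) (le_refl 2)).differentiable one_ne_zero) y).hasFDerivAt
  have hdd : HasDerivAt (fun t => fderiv ℝ w (g t)) (fderiv ℝ (fderiv ℝ w) y v) 0 :=
    hF.comp_hasDerivAt 0 (hg 0)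
  have hdd2 : HasDerivAt (fun t => fderiv ℝ w (g t) v) (fderiv ℝ (fderiv ℝ w) y v v) 0 := by
    simpa using hdd.clm_apply (hasDerivAt_const 0 v)
  have : deriv (deriv (w ∘ g)) 0 = fderiv ℝ (fderiv ℝ w) y v v := by
    rw [hderiv]; exact hdd2.deriv
  rw [← this]
  exact sndDerivTest hu hminu

lemma quad_fderiv (x₀ : E) (y : E) :
    HasFDerivAt (fun z => ⟪z - x₀, z - x₀⟫) ((2:ℝ) • innerSL ℝ (y - x₀)) y := by
  have h1 : HasFDerivAt (fun z : E => z - x₀) (ContinuousLinearMap.id ℝ E) y :=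
    (hasFDerivAt_id y).sub_const x₀
  have := h1.inner ℝ h1
  refine this.congr_fderiv ?_
  ext v
  simp [fderivInnerCLM_apply, two_smul, inner_sub_left, inner_sub_right, real_inner_comm]

lemma psi_fderiv (c b : ℝ) (x₀ : E) (y : E) :
    HasFDerivAt (fun z => c - b * ⟪z - x₀, z - x₀⟫) ((-(2*b)) • innerSL ℝ (y - x₀)) y := by
  have := ((quad_fderiv x₀ y).const_mul b).const_sub c
  refine this.congr_fderiv ?_
  ext v
  simp [two_smul]
  ring

lemma psi_gradient (c b : ℝ) (x₀ : E) (y : E) :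
    HasGradientAt (fun z => c - b * ⟪z - x₀, z - x₀⟫) ((-(2*b)) • (y - x₀)) y := by
  rw [hasGradientAt_iff_hasFDerivAt]
  refine (psi_fderiv c b x₀ y).congr_fderiv ?_
  ext v
  simp [InnerProductSpace.toDual_apply_apply, real_inner_smul_left]

lemma psi_fderiv2 (c b : ℝ) (x₀ y : E) :
    fderiv ℝ (fderiv ℝ (fun z => c - b * ⟪z - x₀, z - x₀⟫)) y
      = (-(2*b)) • (innerSL ℝ : E →L[ℝ] E →L[ℝ] ℝ) := by
  set T : E →L[ℝ] E →L[ℝ] ℝ := (-(2*b)) • (innerSL ℝ : E →L[ℝ] E →L[ℝ] ℝ) with hT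
  have h1 : fderiv ℝ (fun z : E => c - b * ⟪z - x₀, z - x₀⟫) = fun z => T (z - x₀) := by
    funext z
    rw [(psi_fderiv c b x₀ z).fderiv]
    simp [hT]
    exact (neg_smul _ _).symm
  rw [h1]
  have h2 : HasFDerivAt (fun z : E => T (z - x₀)) T y := by
    have h3 := T.hasFDerivAt.comp y ((hasFDerivAt_id y).sub_const x₀)
    simpa [Function.comp_def] using h3
  exact h2.fderiv

lemma comparison {N : ℕ} (m : ℝ) (hm : 2 < m) (f : Spc N → ℝ) (lam : ℝ) (φ : Spc N → ℝ)
    (hφ2 : ContDiff ℝ 2 φ) (heq : ∀ x, lam - eLap N φ x + ‖gradient φ x‖ ^ m = f x)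
    (x₀ : Spc N) (r b K c₀ : ℝ) (hr : 0 < r) (hb : 0 < b)
    (hc₀ : ∀ y, c₀ ≤ φ y)
    (hK : ∀ y ∈ closedBall x₀ r, K ≤ f y - lam)
    (hsub : 2*b*N + (2*b*r) ^ m < K) :
    c₀ + b * r^2 ≤ φ x₀ := by
  set ψ : Spc N → ℝ := fun z => (c₀ + b*r^2) - b * ⟪z - x₀, z - x₀⟫ with hψdef
  have hψc : ContDiff ℝ 2 ψ :=
    contDiff_const.sub (contDiff_const.mul
      ((contDiff_id.sub contDiff_const).inner ℝ (contDiff_id.sub contDiff_const)))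
  set w : Spc N → ℝ := fun z => φ z - ψ z with hwdef
  have hwc : ContDiff ℝ 2 w := hφ2.sub hψc
  obtain ⟨y, hymem, hymin⟩ := (isCompact_closedBall x₀ r).exists_isMinOn
    ⟨x₀, mem_closedBall_self hr.le⟩ hwc.continuous.continuousOn
  have hψx₀ : ψ x₀ = c₀ + b * r^2 := by simp [hψdef]
  rcases eq_or_lt_of_le (mem_closedBall.1 hymem) with hd | hd
  · have hinner : ⟪y - x₀, y - x₀⟫ = r^2 := by
      rw [real_inner_self_eq_norm_sq, ← dist_eq_norm, hd]
    have hψy : ψ y = c₀ := by simp only [hψdef]; rw [hinner]; ring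
    have h0 : (0:ℝ) ≤ w y := by
      simp only [hwdef, hψy]
      linarith [hc₀ y]
    have : w y ≤ w x₀ := hymin (mem_closedBall_self hr.le)
    simp only [hwdef, hψx₀] at this h0 ⊢
    linarith
  · exfalso
    have hloc : IsLocalMin w y :=
      hymin.isLocalMin (mem_of_superset (isOpen_ball.mem_nhds (mem_ball.2 hd))
        ball_subset_closedBall)
    have hφd : ∀ z, DifferentiableAt ℝ φ z := fun z => hφ2.differentiable (by norm_num) z
    have hψd : ∀ z, DifferentiableAt ℝ ψ z := fun z => hψc.differentiable (by norm_num) z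
    have hfd0 : fderiv ℝ w y = 0 := hloc.fderiv_eq_zero
    have hfds : fderiv ℝ w y = fderiv ℝ φ y - fderiv ℝ ψ y := fderiv_sub (hφd y) (hψd y)
    have hfeq : fderiv ℝ φ y = fderiv ℝ ψ y := by
      have := hfds.symm.trans hfd0
      rwa [sub_eq_zero] at this
    have hgrφ : HasGradientAt φ ((-(2*b)) • (y - x₀)) y := by
      rw [hasGradientAt_iff_hasFDerivAt]
      have h1 := (psi_gradient (c₀ + b*r^2) b x₀ y).hasFDerivAt
      rw [h1.unique ((hψd y).hasFDerivAt), ← hfeq]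
      exact (hφd y).hasFDerivAt
    have hgrad : gradient φ y = (-(2*b)) • (y - x₀) := hgrφ.gradient
    have hgnorm : ‖gradient φ y‖ ≤ 2*b*r := by
      rw [hgrad, norm_smul]
      have hyr : ‖y - x₀‖ ≤ r := by rw [← dist_eq_norm]; exact hd.le
      have h2b : |(-(2*b))| = 2*b := by rw [abs_neg, abs_of_pos (by linarith)]
      calc ‖(-(2*b))‖ * ‖y - x₀‖ = (2*b) * ‖y - x₀‖ := by rw [Real.norm_eq_abs, h2b]
        _ ≤ 2*b*r := by nlinarith [norm_nonneg (y - x₀)]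
    have hpow : ‖gradient φ y‖ ^ m ≤ (2*b*r) ^ m :=
      Real.rpow_le_rpow (norm_nonneg _) hgnorm (by linarith)
    have hwfd : fderiv ℝ (fderiv ℝ w) y
        = fderiv ℝ (fderiv ℝ φ) y - fderiv ℝ (fderiv ℝ ψ) y := by
      have h1 : fderiv ℝ w = fun z => fderiv ℝ φ z - fderiv ℝ ψ z :=
        funext fun z => fderiv_sub (hφd z) (hψd z)
      rw [h1]
      exact fderiv_fun_sub ((hφ2.fderiv_right (m := 1) (le_refl 2)).differentiable one_ne_zero y)
        ((hψc.fderiv_right (m := 1) (le_refl 2)).differentiable one_ne_zero y)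
    have hlap : ∀ i : Fin N,
        -(2*b) ≤ fderiv ℝ (fderiv ℝ φ) y (EuclideanSpace.single i (1:ℝ))
          (EuclideanSpace.single i (1:ℝ)) := by
      intro i
      set e : Spc N := EuclideanSpace.single i (1:ℝ) with he
      have h0 := D2test hwc hloc e
      rw [hwfd] at h0
      have hψ2 := psi_fderiv2 (c₀ + b*r^2) b x₀ y
      have hψval : fderiv ℝ (fderiv ℝ ψ) y e e = -(2*b) := by
        rw [hψ2]
        simp [he, EuclideanSpace.inner_single_left, EuclideanSpace.single_apply]
        rw [innerSL_apply_apply]; simp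
      simp only [ContinuousLinearMap.sub_apply] at h0
      rw [hψval] at h0
      linarith
    have hlapsum : -(2*b*N) ≤ eLap N φ y := by
      unfold eLap
      have hiter : ∀ i : Fin N, iteratedFDeriv ℝ 2 φ y
          ![EuclideanSpace.single i (1:ℝ), EuclideanSpace.single i (1:ℝ)]
          = fderiv ℝ (fderiv ℝ φ) y (EuclideanSpace.single i (1:ℝ))
            (EuclideanSpace.single i (1:ℝ)) := by
        intro i
        rw [iteratedFDeriv_two_apply]
        simp
      calc -(2*b*N) = ∑ _i : Fin N, -(2*b) := by
            simp [Finset.sum_const]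
            ring
        _ ≤ _ := Finset.sum_le_sum fun i _ => by rw [hiter i]; exact hlap i
    have heqy := heq y
    have hKy := hK y hymem
    linarith [hpow, hlapsum, heqy, hKy, hsub]

end AuxiliaryLemmas

set_option maxHeartbeats 1000000 in
theorem statement9 (N : ℕ) (hN : 1 ≤ N) (m : ℝ) (hm : 2 < m)
    (f : Spc N → ℝ) (hf : Continuous f) (hH1 : H1 N f)
    (lam : ℝ) (φ : Spc N → ℝ) (hφ : IsErgodicSolution N m f lam φ)
    (hφb : BddBelow (range φ)) :
    ∀ M : ℝ, ∃ R > (0:ℝ), ∀ x : Spc N, R ≤ ‖x‖ → M ≤ φ x / ‖x‖ := by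
  obtain ⟨g, α, g₀, f₀, hα, hg₀, hf₀, -, -, hglb, hfbd⟩ := hH1
  obtain ⟨hφ2, heq⟩ := hφ
  obtain ⟨c₀, hc₀'⟩ := hφb
  have hc₀ : ∀ y, c₀ ≤ φ y := fun y => hc₀' ⟨y, rfl⟩
  intro M
  have hmpos : (0:ℝ) < m := by linarith
  set c : ℝ := f₀⁻¹ * g₀⁻¹ with hcdef
  have hcpos : 0 < c := by rw [hcdef]; positivity
  set Kf : ℝ → ℝ := fun s => c * (s/2) ^ α - (f₀ + lam) with hKfdef
  have h1 : Tendsto (fun s : ℝ => s/2) atTop atTop :=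
    tendsto_id.atTop_div_const (by norm_num)
  have h2 : Tendsto (fun s : ℝ => (s/2) ^ α) atTop atTop := (tendsto_rpow_atTop hα).comp h1
  have hKt : Tendsto Kf atTop atTop := by
    have h3 := tendsto_atTop_add_const_right atTop (-(f₀+lam)) (h2.const_mul_atTop hcpos)
    simpa [hKfdef, sub_eq_add_neg] using h3
  have hPt : Tendsto (fun s => (Kf s / 2) ^ (1/m) / 4) atTop atTop :=
    ((tendsto_rpow_atTop (by positivity)).comp (hKt.atTop_div_const (by norm_num))).atTop_div_const
      (by norm_num)
  have h0 : Tendsto (fun s : ℝ => c₀ / s) atTop (𝓝 0) := tendsto_const_nhds.div_atTop tendsto_id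
  have E := (eventually_ge_atTop (1:ℝ)).and ((h1.eventually_gt_atTop (N:ℝ)).and
    ((hKt.eventually_ge_atTop 2).and ((hPt.eventually_ge_atTop (M+1)).and
    (h0.eventually (eventually_ge_nhds (by norm_num : (-1:ℝ) < 0))))))
  obtain ⟨R₀, hR₀⟩ := eventually_atTop.1 E
  refine ⟨max R₀ 1, lt_of_lt_of_le one_pos (le_max_right _ _), ?_⟩
  intro x hx
  obtain ⟨hs1, hsN, hsK, hsP, hsc⟩ := hR₀ ‖x‖ (le_trans (le_max_left _ _) hx)
  set s := ‖x‖ with hsdef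
  set r := s/2 with hrdef
  set K := Kf s with hKdef
  have hKval : K = c * r ^ α - (f₀ + lam) := by rw [hKdef, hrdef]
  set b := (K/2) ^ (1/m) / (2*r) with hbdef
  clear_value b K r s
  have hspos : 0 < s := by linarith
  have hrpos : 0 < r := by rw [hrdef]; linarith
  have hrne : r ≠ 0 := ne_of_gt hrpos
  have hsne : s ≠ 0 := ne_of_gt hspos
  have hK2 : 2 ≤ K := hsK
  have hKpos : 0 < K := by linarith
  have hrp : 0 < (K/2) ^ (1/m) := Real.rpow_pos_of_pos (by linarith) _
  have hbpos : 0 < b := by rw [hbdef]; exact div_pos hrp (by linarith)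
  have hKlb : ∀ y ∈ closedBall x r, K ≤ f y - lam := by
    intro y hy
    have hdist : dist y x ≤ r := mem_closedBall.1 hy
    have hyn : r ≤ ‖y‖ := by
      have h4 : ‖x‖ - ‖y‖ ≤ ‖x - y‖ := norm_sub_norm_le x y
      have h5 : ‖x - y‖ = dist y x := by rw [← dist_eq_norm, dist_comm]
      have h6 : s - ‖y‖ ≤ r := by rw [hsdef]; linarith [h4, h5 ▸ hdist]
      rw [hrdef] at h6 ⊢
      linarith
    have hgy := hglb ‖y‖ (norm_nonneg y)
    have hfy := (hfbd y).1
    have hmono : r ^ α ≤ ‖y‖ ^ α := Real.rpow_le_rpow hrpos.le hyn hα.le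
    have hstep : c * r ^ α ≤ f₀⁻¹ * g ‖y‖ := by
      rw [hcdef]
      have h1' : g₀⁻¹ * r ^ α ≤ g₀⁻¹ * ‖y‖ ^ α :=
        mul_le_mul_of_nonneg_left hmono (inv_pos.2 hg₀).le
      have h3' := mul_le_mul_of_nonneg_left (h1'.trans hgy) (inv_pos.2 hf₀).le
      linarith [h3', mul_assoc f₀⁻¹ g₀⁻¹ (r ^ α)]
    rw [hKval]
    linarith [hstep, hfy]
  have h2br : 2*b*r = (K/2)^(1/m) := by
    rw [hbdef]
    field_simp
  have hsub : 2*b*(N:ℝ) + (2*b*r) ^ m < K := by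
    have hmne : (1/m) * m = 1 := one_div_mul_cancel (ne_of_gt hmpos)
    have hKm : ((K/2) ^ (1/m)) ^ m = K/2 := by
      rw [← Real.rpow_mul (by linarith : (0:ℝ) ≤ K/2), hmne, Real.rpow_one]
    have hexp : (K/2) ^ (1/m) ≤ K/2 := by
      have h7 := Real.rpow_le_rpow_of_exponent_le (by linarith : 1 ≤ K/2)
        (by rw [div_le_one hmpos]; linarith : 1/m ≤ 1)
      simpa using h7
    have h2bN : 2*b*(N:ℝ) = (K/2)^(1/m) * N / r := by
      rw [hbdef]; field_simp
    rw [h2br, hKm, h2bN]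
    have hNr : (N:ℝ) < r := hsN
    have hNn : (0:ℝ) ≤ N := Nat.cast_nonneg N
    have h9 : (K/2)^(1/m) * (N:ℝ) / r < K/2 := by
      rw [div_lt_iff₀ hrpos]
      nlinarith [mul_le_mul_of_nonneg_right hexp hNn,
        mul_lt_mul_of_pos_left hNr (by linarith : (0:ℝ) < K/2)]
    linarith
  have hcomp := comparison m hm f lam φ hφ2 heq x r b K c₀ hrpos hbpos hc₀ hKlb hsub
  have hbr2 : b * r^2 = s * ((K/2)^(1/m)) / 4 := by
    rw [hbdef, hrdef]
    field_simp
    ring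
  rw [le_div_iff₀ hspos]
  have hc₀s : -s ≤ c₀ := by
    have h8 := mul_le_mul_of_nonneg_right hsc hspos.le
    rw [div_mul_cancel₀ _ hsne] at h8
    linarith
  have hPs : M + 1 ≤ (K/2)^(1/m)/4 := hsP
  nlinarith [hcomp, hbr2, hc₀s, mul_le_mul_of_nonneg_left hPs hspos.le]
end
end

section
/- Let m > 2 and β ∈ (0,1). Then there exist b > 0 and a function χ : (−∞, b) → ℝ of class C^∞ such that: χ(s) = 0 for all s ≤ 0; χ'(s) > 0 and χ''(s) > 0 for all s ∈ (0,b); χ(s) → +∞ as s → b⁻; and for all s ∈ (0,b), ((m−2)/m) · ( χ''(s) / [ (1+χ'(s))^m − (1+χ'(s)) ]^{2/m} )^{m/(m−2)} ≤ (χ'(s))^β. -/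
open Set Filter Topology Metric

noncomputable section

private lemma st11_exp_quad (x : ℝ) (hx : 0 ≤ x) : 1 + x^2/4 ≤ Real.exp x := by
  have h := Real.add_one_le_exp (x/2)
  have h2 : Real.exp (x/2) ^ 2 = Real.exp x := by
    rw [← Real.exp_nat_mul]; ring_nf
  nlinarith [Real.exp_pos (x/2)]

set_option maxHeartbeats 1000000 in
private lemma st11_key_W (δ ρ σ b s : ℝ) (hδ : 0 < δ) (hρ : 0 < ρ)
    (hσ : σ = 1 + ρ + δ)
    (hb4 : 1/(ρ * Real.log (5/4)) ≤ b - 4)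
    (hbδ : (4/δ^2 : ℝ) ^ (1/δ) ≤ b - 2)
    (hb6 : 6 ≤ b)
    (hs0 : 0 < s) (hsb : s < b) :
    (s^2)⁻¹ + (b - s)⁻¹ ≤
      (Real.exp (-s⁻¹) * (b-s)⁻¹) ^ (-δ) * (1 + Real.exp (-s⁻¹) * (b-s)⁻¹) ^ σ := by
  have hL : 0 < Real.log (5/4) := Real.log_pos (by norm_num)
  set u : ℝ := b - s with hu
  have hu0 : 0 < u := by simp [hu]; linarith
  set E : ℝ := Real.exp (-s⁻¹) with hE
  have hE0 : 0 < E := Real.exp_pos _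
  have hE1 : E < 1 := by
    rw [hE, Real.exp_lt_one_iff]
    exact neg_lt_zero.mpr (by positivity)
  set G : ℝ := E * u⁻¹ with hG
  have hG0 : 0 < G := by positivity
  have hG1 : 0 < 1 + G := by linarith
  have hEinv : E * Real.exp s⁻¹ = 1 := by
    rw [hE, ← Real.exp_add]; simp
  have huinv : u⁻¹ = Real.exp s⁻¹ * G := by
    rw [hG, ← mul_assoc, mul_comm (Real.exp s⁻¹) E, hEinv, one_mul]
  have hσ0 : 0 < σ := by rw [hσ]; linarith
  rcases le_or_gt G (1/4) with hsmall | hbig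
  · -- G small
    have hR2 : 1 ≤ (1+G) ^ σ := Real.one_le_rpow (by linarith) hσ0.le
    have hRδ : G ^ (-δ) * 1 ≤ G ^ (-δ) * (1+G)^σ :=
      mul_le_mul_of_nonneg_left hR2 (Real.rpow_nonneg hG0.le _)
    rw [mul_one] at hRδ
    refine le_trans ?_ hRδ
    rcases le_or_gt 2 s with hs2 | hs2
    · -- s ≥ 2
      have hR1 : 1 ≤ G ^ (-δ) :=
        Real.one_le_rpow_of_pos_of_le_one_of_nonpos hG0 (by linarith) (by linarith)
      have h1 : (s^2)⁻¹ ≤ 1/4 := by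
        rw [inv_le_comm₀ (by positivity) (by norm_num)]
        nlinarith
      have hexphalf : Real.exp s⁻¹ < 2 := by
        have h3 : Real.exp s⁻¹ ≤ Real.exp (1/2) := by
          apply Real.exp_le_exp.mpr
          rw [inv_le_comm₀ hs0 (by norm_num)]; linarith
        have h4 : Real.exp (1/2) ^ 2 = Real.exp 1 := by
          rw [← Real.exp_nat_mul]; ring_nf
        nlinarith [Real.exp_pos (1/2), Real.exp_one_lt_d9]
      have h2 : u⁻¹ ≤ 1/2 := by
        rw [huinv]; nlinarith
      linarith
    · -- s < 2, so u ≥ b - 2 ≥ 4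
      have hub : b - 2 ≤ u := by rw [hu]; linarith
      have hb2pos : (0:ℝ) < b - 2 := by linarith
      have hb2_4 : (4:ℝ) ≤ b - 2 := by linarith
      have hpow : 4/δ^2 ≤ (b-2)^δ := by
        have h0 : (0:ℝ) ≤ 4/δ^2 := by positivity
        calc 4/δ^2 = ((4/δ^2 : ℝ) ^ (1/δ)) ^ δ := by
              rw [← Real.rpow_mul h0, one_div_mul_cancel hδ.ne', Real.rpow_one]
          _ ≤ (b-2)^δ := Real.rpow_le_rpow (Real.rpow_nonneg h0 _) hbδ hδ.le
      have hone : 1 ≤ (b-2)^δ := Real.one_le_rpow (by linarith) hδ.le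
      have hgd : G ^ (-δ) = Real.exp (δ * s⁻¹) * u ^ δ := by
        rw [hG, Real.mul_rpow hE0.le (by positivity), hE,
          ← Real.exp_log (x := Real.exp (-s⁻¹) ^ (-δ)) (by positivity),
          Real.log_rpow (Real.exp_pos _), Real.log_exp,
          ← Real.rpow_neg_one u, ← Real.rpow_mul hu0.le]
        ring_nf
      have hexpq : 1 + (δ * s⁻¹)^2/4 ≤ Real.exp (δ * s⁻¹) := st11_exp_quad _ (by positivity)
      have huδ : (b-2)^δ ≤ u ^ δ := Real.rpow_le_rpow hb2pos.le hub hδ.le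
      have hu4 : u⁻¹ ≤ 1/4 := by
        rw [inv_le_comm₀ hu0 (by norm_num)]; linarith
      have hss : (δ * s⁻¹)^2 = δ^2 * (s^2)⁻¹ := by
        field_simp
      rw [hgd]
      have hmain : (b-2)^δ * (1 + δ^2 * (s^2)⁻¹ / 4) ≤ Real.exp (δ * s⁻¹) * u ^ δ := by
        have h5 : (0:ℝ) < 1 + δ^2 * (s^2)⁻¹/4 := by positivity
        calc (b-2)^δ * (1 + δ^2 * (s^2)⁻¹ / 4)
            ≤ u^δ * (1 + δ^2 * (s^2)⁻¹/4) := mul_le_mul_of_nonneg_right huδ h5.le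
          _ ≤ u^δ * Real.exp (δ * s⁻¹) := by
              apply mul_le_mul_of_nonneg_left _ (Real.rpow_nonneg hu0.le _)
              rw [← hss]; exact hexpq
          _ = Real.exp (δ * s⁻¹) * u ^ δ := by ring
      refine le_trans ?_ hmain
      -- (s²)⁻¹ + u⁻¹ ≤ (b-2)^δ + (b-2)^δ δ²/(4s²)
      have h6 : (1:ℝ) ≤ (b-2)^δ * δ^2/4 := by
        calc (1:ℝ) = 4/δ^2 * (δ^2/4) := by field_simp
          _ ≤ (b-2)^δ * (δ^2/4) :=
              mul_le_mul_of_nonneg_right hpow (by positivity)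
          _ = (b-2)^δ * δ^2/4 := by ring
      have hY : (0:ℝ) ≤ (s^2)⁻¹ := by positivity
      have hterm1 : (s^2)⁻¹ ≤ (b-2)^δ * (δ^2 * (s^2)⁻¹/4) := by
        calc (s^2)⁻¹ = 1 * (s^2)⁻¹ := (one_mul _).symm
          _ ≤ ((b-2)^δ * δ^2/4) * (s^2)⁻¹ := mul_le_mul_of_nonneg_right h6 hY
          _ = (b-2)^δ * (δ^2 * (s^2)⁻¹/4) := by ring
      have hterm2 : u⁻¹ ≤ (b-2)^δ := by linarith
      have hexpand : (b-2)^δ * (1 + δ^2*(s^2)⁻¹/4)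
          = (b-2)^δ + (b-2)^δ * (δ^2*(s^2)⁻¹/4) := by ring
      linarith
  · -- G big
    have hu4 : u < 4 := by
      have h1 : u * G = E := by
        rw [hG, mul_comm E, ← mul_assoc, mul_inv_cancel₀ hu0.ne', one_mul]
      nlinarith [h1, hE1, hbig, hu0]
    have hs4 : b - 4 < s := by rw [hu] at hu4; linarith
    have hsinv : s⁻¹ ≤ ρ * Real.log (5/4) := by
      have hρL : 0 < ρ * Real.log (5/4) := by positivity
      have h1 : (ρ * Real.log (5/4))⁻¹ ≤ s := by
        rw [one_div] at hb4; linarith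
      calc s⁻¹ ≤ ((ρ * Real.log (5/4))⁻¹)⁻¹ :=
            inv_anti₀ (by positivity) h1
        _ = ρ * Real.log (5/4) := inv_inv _
    have hexp : Real.exp s⁻¹ ≤ (5/4:ℝ) ^ ρ := by
      rw [Real.rpow_def_of_pos (by norm_num)]
      exact Real.exp_le_exp.mpr (by linarith)
    have h54 : (1:ℝ) ≤ (5/4:ℝ)^ρ := Real.one_le_rpow (by norm_num) hρ.le
    have hs2 : 2 ≤ s := by linarith
    have hW : (s^2)⁻¹ + u⁻¹ ≤ (5/4)^ρ * (1 + G) := by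
      have h1 : (s^2)⁻¹ ≤ 1 := by
        rw [inv_le_one_iff₀]; right; nlinarith
      have h2 : u⁻¹ ≤ (5/4)^ρ * G := by
        rw [huinv]; exact mul_le_mul_of_nonneg_right hexp hG0.le
      nlinarith
    have hB : (5/4:ℝ)^ρ ≤ (1+G)^ρ := Real.rpow_le_rpow (by norm_num) (by linarith) hρ.le
    have hA : (1+G)^(1+ρ) = (1+G) * (1+G)^ρ := by
      rw [Real.rpow_add hG1, Real.rpow_one]
    have hC : (1+G)^σ = (1+G)^δ * (1+G)^(1+ρ) := by
      rw [← Real.rpow_add hG1, hσ]; ring_nf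
    have hD1 : G^(-δ) * (1+G)^δ = ((1+G)/G)^δ := by
      rw [Real.div_rpow (by linarith) hG0.le, Real.rpow_neg hG0.le]
      ring
    have hD : 1 ≤ G^(-δ) * (1+G)^δ := by
      rw [hD1]
      exact Real.one_le_rpow ((le_div_iff₀ hG0).mpr (by linarith)) hδ.le
    calc (s^2)⁻¹ + u⁻¹ ≤ (5/4)^ρ * (1 + G) := hW
      _ ≤ (1+G)^ρ * (1+G) := mul_le_mul_of_nonneg_right hB hG1.le
      _ = (1+G)^(1+ρ) := by rw [hA]; ring
      _ ≤ (G^(-δ) * (1+G)^δ) * (1+G)^(1+ρ) := by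
          nlinarith [Real.rpow_pos_of_pos hG1 (1+ρ)]
      _ = G^(-δ) * (1+G)^σ := by rw [hC]; ring


private lemma st11_key_D (m G : ℝ) (hm : 2 < m) (hG : 0 < G) :
    G * (1+G)^(m-1) ≤ (1+G)^m - (1+G) := by
  have hx : (1:ℝ) < 1 + G := by linarith
  have hx0 : (0:ℝ) < 1 + G := by linarith
  have h1 : (1+G)^m = (1+G)^(m-1) * (1+G) := by
    rw [← Real.rpow_add_one hx0.ne']; ring_nf
  have h2 : (1+G)^(m-1) = (1+G)^(m-2) * (1+G) := by
    rw [← Real.rpow_add_one hx0.ne']; ring_nf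
  have hP : 1 ≤ (1+G)^(m-2) := Real.one_le_rpow hx.le (by linarith)
  nlinarith [Real.rpow_pos_of_pos hx0 (m-2)]

set_option maxHeartbeats 1000000 in
private lemma st11_key_final (m β G W : ℝ) (hm : 2 < m) (hβ0 : 0 < β) (hβ1 : β < 1)
    (hG : 0 < G) (hW0 : 0 < W)
    (hW : W ≤ G ^ (-((1-β)*(m-2)/m)) * (1+G) ^ (2*(m-1)/m)) :
    (m-2)/m * (G * W / ((1+G)^m - (1+G)) ^ (2/m)) ^ (m/(m-2)) ≤ G ^ β := by
  have hm0 : (0:ℝ) < m := by linarith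
  have hm2 : (0:ℝ) < m - 2 := by linarith
  set δ : ℝ := (1-β)*(m-2)/m with hδdef
  set ρ : ℝ := β*(m-2)/m with hρdef
  set σ : ℝ := 2*(m-1)/m with hσdef
  have hG1 : (0:ℝ) < 1 + G := by linarith
  have hD := st11_key_D m G hm hG
  have hDpos : (0:ℝ) < (1+G)^m - (1+G) :=
    lt_of_lt_of_le (by positivity) hD
  have hDpow : G^(2/m) * (1+G)^σ ≤ ((1+G)^m - (1+G))^(2/m) := by
    have h1 := Real.rpow_le_rpow (by positivity) hD (by positivity : (0:ℝ) ≤ 2/m)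
    calc G^(2/m) * (1+G)^σ
        = (G * (1+G)^(m-1))^(2/m) := by
          rw [Real.mul_rpow hG.le (by positivity), ← Real.rpow_mul hG1.le]
          congr 1
          rw [hσdef]; ring
      _ ≤ ((1+G)^m - (1+G))^(2/m) := h1
  have hchain : G * W ≤ G^ρ * ((1+G)^m - (1+G))^(2/m) := by
    have h2 : G * W ≤ G * (G^(-δ) * (1+G)^σ) :=
      mul_le_mul_of_nonneg_left hW hG.le
    have h3 : G * (G^(-δ) * (1+G)^σ) = G^ρ * (G^(2/m) * (1+G)^σ) := by
      rw [← mul_assoc, ← mul_assoc]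
      congr 1
      nth_rewrite 1 [← Real.rpow_one G]
      rw [← Real.rpow_add hG, ← Real.rpow_add hG]
      congr 1
      rw [hρdef, hδdef]; field_simp; ring
    calc G * W ≤ G^ρ * (G^(2/m) * (1+G)^σ) := by rw [← h3]; exact h2
      _ ≤ G^ρ * ((1+G)^m - (1+G))^(2/m) :=
          mul_le_mul_of_nonneg_left hDpow (Real.rpow_nonneg hG.le _)
  have hDq : (0:ℝ) < ((1+G)^m - (1+G))^(2/m) := Real.rpow_pos_of_pos hDpos _
  have hdiv : G * W / ((1+G)^m - (1+G))^(2/m) ≤ G^ρ :=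
    (div_le_iff₀ hDq).mpr hchain
  have hdivnn : (0:ℝ) ≤ G * W / ((1+G)^m - (1+G))^(2/m) := by positivity
  have hq : (0:ℝ) ≤ m/(m-2) := by positivity
  have hfinal : (G * W / ((1+G)^m - (1+G))^(2/m)) ^ (m/(m-2)) ≤ G ^ β := by
    calc (G * W / ((1+G)^m - (1+G))^(2/m)) ^ (m/(m-2))
        ≤ (G^ρ) ^ (m/(m-2)) := Real.rpow_le_rpow hdivnn hdiv hq
      _ = G ^ (ρ * (m/(m-2))) := by rw [← Real.rpow_mul hG.le]
      _ = G ^ β := by congr 1; rw [hρdef]; field_simp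
  have hc0 : (m-2)/m ≤ 1 := by
    rw [div_le_one hm0]; linarith
  calc (m-2)/m * (G * W / ((1+G)^m - (1+G))^(2/m)) ^ (m/(m-2))
      ≤ 1 * (G * W / ((1+G)^m - (1+G))^(2/m)) ^ (m/(m-2)) :=
        mul_le_mul_of_nonneg_right hc0 (Real.rpow_nonneg hdivnn _)
    _ = _ := one_mul _
    _ ≤ G ^ β := hfinal


theorem statement11 (m β : ℝ) (hm : 2 < m) (hβ : β ∈ Set.Ioo (0:ℝ) 1) :
    ∃ b > (0:ℝ), ∃ χ : ℝ → ℝ,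
      ContDiffOn ℝ (⊤ : ℕ∞) χ (Iio b) ∧
      (∀ s ≤ (0:ℝ), χ s = 0) ∧
      (∀ s ∈ Ioo (0:ℝ) b, 0 < deriv χ s ∧ 0 < deriv (deriv χ) s) ∧
      Tendsto χ (𝓝[<] b) atTop ∧
      (∀ s ∈ Ioo (0:ℝ) b,
        ((m - 2) / m) *
          (deriv (deriv χ) s /
            ((1 + deriv χ s) ^ m - (1 + deriv χ s)) ^ (2 / m)) ^ (m / (m - 2))
          ≤ (deriv χ s) ^ β) := by
  obtain ⟨hβ0, hβ1⟩ := hβ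
  have hm0 : (0:ℝ) < m := by linarith
  have hm2 : (0:ℝ) < m - 2 := by linarith
  set δ : ℝ := (1 - β) * (m - 2) / m with hδdef
  set ρ : ℝ := β * (m - 2) / m with hρdef
  have hδ : 0 < δ := div_pos (mul_pos (by linarith) hm2) hm0
  have hρ : 0 < ρ := by rw [hρdef]; positivity
  have hL : 0 < Real.log (5/4) := Real.log_pos (by norm_num)
  set b : ℝ := 6 + 1/(ρ * Real.log (5/4)) + (4/δ^2 : ℝ) ^ (1/δ) with hbdef
  have hba1 : 0 < 1/(ρ * Real.log (5/4)) := by positivity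
  have hba2 : 0 < (4/δ^2 : ℝ) ^ (1/δ) := Real.rpow_pos_of_pos (by positivity) _
  have hb6 : 6 ≤ b := by rw [hbdef]; linarith
  have hb0 : 0 < b := by linarith
  have hb4 : 1/(ρ * Real.log (5/4)) ≤ b - 4 := by rw [hbdef]; linarith
  have hbδ : (4/δ^2 : ℝ) ^ (1/δ) ≤ b - 2 := by rw [hbdef]; linarith
  set g : ℝ → ℝ := fun t => expNegInvGlue t * (b - t)⁻¹ with hgdef
  set χ : ℝ → ℝ := fun s => ∫ t in (0:ℝ)..s, g t with hχdef
  -- continuity of g on (-∞, b)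
  have hgC : ContinuousOn g (Iio b) := by
    apply (expNegInvGlue.contDiff (n := (1:ℕ∞)).continuous.continuousOn).mul
    exact ContinuousOn.inv₀ (continuousOn_const.sub continuousOn_id)
      (fun x hx => sub_ne_zero.mpr (ne_of_gt hx))
  have hsub : ∀ x y : ℝ, x < b → y < b → uIcc x y ⊆ Iio b := by
    intro x y hx hy t ht
    exact lt_of_le_of_lt ht.2 (max_lt hx hy)
  have hint : ∀ x y : ℝ, x < b → y < b → IntervalIntegrable g MeasureTheory.volume x y :=
    fun x y hx hy => ((hgC.mono (hsub x y hx hy)).intervalIntegrable)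
  have hderiv : ∀ x ∈ Iio b, HasDerivAt χ (g x) x := by
    intro x hx
    exact intervalIntegral.integral_hasDerivAt_right (hint 0 x hb0 hx)
      (hgC.stronglyMeasurableAtFilter isOpen_Iio x hx)
      (hgC.continuousAt (isOpen_Iio.mem_nhds hx))
  have hd1 : ∀ x ∈ Iio b, deriv χ x = g x := fun x hx => (hderiv x hx).deriv
  -- explicit form of g on (0,b)
  have hEg : ∀ t : ℝ, 0 < t → g t = Real.exp (-t⁻¹) * (b - t)⁻¹ := by
    intro t ht
    rw [hgdef]
    simp only [expNegInvGlue, if_neg (not_le.mpr ht)]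
  -- second derivative
  have hgd : ∀ s ∈ Ioo (0:ℝ) b, HasDerivAt g
      (Real.exp (-s⁻¹) * (b-s)⁻¹ * ((s^2)⁻¹ + (b-s)⁻¹)) s := by
    intro s hs
    obtain ⟨hs0, hsb⟩ := hs
    have hbs : 0 < b - s := by linarith
    have h1 : HasDerivAt (fun t : ℝ => -t⁻¹) ((s^2)⁻¹) s := by
      simpa using (hasDerivAt_inv hs0.ne').fun_neg
    have h2 : HasDerivAt (fun t : ℝ => Real.exp (-t⁻¹)) (Real.exp (-s⁻¹) * (s^2)⁻¹) s :=
      (Real.hasDerivAt_exp _).comp s h1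
    have h3 : HasDerivAt (fun t : ℝ => b - t) (-1) s := by
      simpa using (hasDerivAt_id s).const_sub b
    have h4 : HasDerivAt (fun t : ℝ => (b - t)⁻¹) (-(-1) / (b-s)^2) s := h3.inv hbs.ne'
    have h5 := h2.mul h4
    have h6 : g =ᶠ[𝓝 s] fun t => Real.exp (-t⁻¹) * (b - t)⁻¹ := by
      filter_upwards [isOpen_Ioo.mem_nhds (⟨hs0, hsb⟩ : s ∈ Ioo 0 b)] with t ht
      exact hEg t ht.1
    have h7 := h5.congr_of_eventuallyEq h6
    refine h7.congr_deriv ?_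
    field_simp
  have hd2 : ∀ s ∈ Ioo (0:ℝ) b, deriv (deriv χ) s
      = Real.exp (-s⁻¹) * (b-s)⁻¹ * ((s^2)⁻¹ + (b-s)⁻¹) := by
    intro s hs
    have heq : deriv χ =ᶠ[𝓝 s] g :=
      Filter.eventually_of_mem (isOpen_Iio.mem_nhds hs.2) hd1
    rw [heq.deriv_eq]
    exact (hgd s hs).deriv
  have hd1' : ∀ s ∈ Ioo (0:ℝ) b, deriv χ s = Real.exp (-s⁻¹) * (b - s)⁻¹ := by
    intro s hs
    rw [hd1 s hs.2]
    exact hEg s hs.1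
  refine ⟨b, hb0, χ, ?_, ?_, ?_, ?_, ?_⟩
  · -- smoothness
    rw [contDiffOn_infty_iff_derivWithin (uniqueDiffOn_Iio b)]
    refine ⟨fun x hx => (hderiv x hx).differentiableAt.differentiableWithinAt, ?_⟩
    have hgsm : ContDiffOn ℝ (⊤:ℕ∞) g (Iio b) := by
      apply (expNegInvGlue.contDiff.contDiffOn).mul
      exact (contDiffOn_const.sub contDiffOn_id).inv
        (fun x hx => sub_ne_zero.mpr (ne_of_gt hx))
    exact hgsm.congr fun x hx => (derivWithin_of_isOpen isOpen_Iio hx).trans (hd1 x hx)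
  · -- zero for s ≤ 0
    intro s hs
    have h0 : EqOn g (fun _ => (0:ℝ)) (uIcc 0 s) := by
      intro t ht
      have hsup : (0:ℝ) ⊔ s = 0 := sup_eq_left.mpr hs
      have ht0 : t ≤ 0 := hsup ▸ ht.2
      simp [hgdef, expNegInvGlue.zero_of_nonpos ht0]
    calc χ s = ∫ t in (0:ℝ)..s, (0:ℝ) := intervalIntegral.integral_congr h0
      _ = 0 := intervalIntegral.integral_zero
  · -- positivity of derivatives
    intro s hs
    have hbs : 0 < b - s := by simpa using sub_pos.mpr hs.2
    constructor
    · rw [hd1' s hs]; positivity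
    · rw [hd2 s hs]
      have hs0 := hs.1
      positivity
  · -- blow-up
    have hb1b : b - 1 < b := by linarith
    have hlow : ∀ s ∈ Ioo (b-1) b,
        χ (b-1) - Real.exp (-1) * Real.log (b - s) ≤ χ s := by
      intro s hs
      obtain ⟨hs1, hs2⟩ := hs
      have hint1 := hint 0 (b-1) hb0 hb1b
      have hint2 := hint (b-1) s hb1b hs2
      have hsplit : χ (b-1) + ∫ t in (b-1)..s, g t = χ s :=
        intervalIntegral.integral_add_adjacent_intervals hint1 hint2
      have huIcc : uIcc (b-1) s = Icc (b-1) s := uIcc_of_le hs1.le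
      have hicont : ContinuousOn (fun t : ℝ => Real.exp (-1) * (b - t)⁻¹) (uIcc (b-1) s) := by
        apply continuousOn_const.mul
        apply ContinuousOn.inv₀ (continuousOn_const.sub continuousOn_id)
        intro t ht
        rw [huIcc] at ht
        exact sub_ne_zero.mpr (ne_of_gt (lt_of_le_of_lt ht.2 hs2))
      have hintc : IntervalIntegrable (fun t : ℝ => Real.exp (-1) * (b - t)⁻¹)
          MeasureTheory.volume (b-1) s := hicont.intervalIntegrable
      have hFTC : ∫ t in (b-1)..s, Real.exp (-1) * (b - t)⁻¹
          = -(Real.exp (-1) * Real.log (b - s)) := by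
        have hdlog : ∀ t ∈ uIcc (b-1) s,
            HasDerivAt (fun t : ℝ => -(Real.exp (-1) * Real.log (b - t)))
              (Real.exp (-1) * (b - t)⁻¹) t := by
          intro t ht
          rw [huIcc] at ht
          have htb : t < b := lt_of_le_of_lt ht.2 hs2
          have hbt : 0 < b - t := sub_pos.mpr htb
          have h3 : HasDerivAt (fun t : ℝ => b - t) (-1) t := by
            simpa using (hasDerivAt_id t).const_sub b
          have h4 : HasDerivAt (fun t : ℝ => Real.log (b - t)) ((b - t)⁻¹ * -1) t :=
            (Real.hasDerivAt_log hbt.ne').comp t h3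
          have h5 := (h4.const_mul (Real.exp (-1))).fun_neg
          refine h5.congr_deriv ?_
          ring
        rw [intervalIntegral.integral_eq_sub_of_hasDerivAt hdlog hintc]
        have : b - (b - 1) = 1 := by ring
        rw [this, Real.log_one]
        ring
      have hmono' : ∫ t in (b-1)..s, Real.exp (-1) * (b - t)⁻¹ ≤ ∫ t in (b-1)..s, g t := by
        apply intervalIntegral.integral_mono_on hs1.le hintc hint2
        intro t ht
        have ht1 : 1 ≤ t := by linarith [ht.1]
        have htb : t < b := lt_of_le_of_lt ht.2 hs2
        have hbt : 0 < b - t := sub_pos.mpr htb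
        have ht0 : (0:ℝ) < t := by linarith
        have hE : Real.exp (-1) ≤ expNegInvGlue t := by
          have hEt : expNegInvGlue t = Real.exp (-t⁻¹) := by
            simp only [expNegInvGlue, if_neg (not_le.mpr ht0)]
          rw [hEt]
          apply Real.exp_le_exp.mpr
          have h7 : t⁻¹ ≤ 1 := by
            rw [inv_le_one_iff₀]; right; linarith
          linarith
        calc Real.exp (-1) * (b - t)⁻¹ ≤ expNegInvGlue t * (b - t)⁻¹ :=
              mul_le_mul_of_nonneg_right hE (by positivity)
          _ = g t := rfl
      linarith [hsplit, hFTC, hmono']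
    have haux : Tendsto (fun s => χ (b-1) - Real.exp (-1) * Real.log (b - s)) (𝓝[<] b) atTop := by
      have h1 : Tendsto (fun s : ℝ => b - s) (𝓝[<] b) (𝓝[>] 0) := by
        apply tendsto_nhdsWithin_of_tendsto_nhds_of_eventually_within
        · have h0 : Tendsto (fun s : ℝ => b - s) (𝓝 b) (𝓝 (b - b)) :=
            (continuous_const.sub continuous_id).tendsto b
          simpa using h0.mono_left nhdsWithin_le_nhds
        · exact eventually_mem_nhdsWithin.mono fun s hs => by
            simpa using sub_pos.mpr (mem_Iio.mp hs)
      have h2 : Tendsto (fun s : ℝ => Real.log (b - s)) (𝓝[<] b) atBot :=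
        Real.tendsto_log_nhdsGT_zero.comp h1
      have h3 : Tendsto (fun s : ℝ => Real.exp (-1) * Real.log (b - s)) (𝓝[<] b) atBot :=
        h2.const_mul_atBot (Real.exp_pos _)
      have h4 : Tendsto (fun s : ℝ => -(Real.exp (-1) * Real.log (b - s))) (𝓝[<] b) atTop :=
        tendsto_neg_atBot_atTop.comp h3
      have h5 := tendsto_atTop_add_const_left _ (χ (b-1)) h4
      simpa [sub_eq_add_neg] using h5
    refine tendsto_atTop_mono' _ ?_ haux
    filter_upwards [Ioo_mem_nhdsLT_of_mem
      (show b ∈ Ioc (b-1) b from ⟨hb1b, le_refl b⟩)] with s hs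
    exact hlow s hs
  · -- the main inequality
    intro s hs
    have hbs : 0 < b - s := sub_pos.mpr hs.2
    have hs0 : 0 < s := hs.1
    have hG0 : 0 < Real.exp (-s⁻¹) * (b - s)⁻¹ := by positivity
    have hW0 : 0 < (s^2)⁻¹ + (b-s)⁻¹ := by positivity
    have hσeq : 2*(m-1)/m = 1 + ρ + δ := by
      rw [hρdef, hδdef]; field_simp; ring
    have hWle := st11_key_W δ ρ (2*(m-1)/m) b s hδ hρ hσeq hb4 hbδ hb6 hs.1 hs.2
    rw [hd1' s hs, hd2 s hs]
    refine st11_key_final m β (Real.exp (-s⁻¹) * (b-s)⁻¹) ((s^2)⁻¹ + (b-s)⁻¹)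
      hm hβ0 hβ1 hG0 hW0 ?_
    exact hWle
end
end

section
/- Let m > 2 and β ∈ (0,1). Then there exist M > 0 and a function ξ : ℝ → ℝ of class C^∞ such that: ξ(s) = s for all s ≤ 0; 0 < ξ'(s) < 1 and ξ''(s) < 0 for all s > 0; ξ is increasing and ξ(s) → M as s → +∞; and for all s > 0, ((m−2)/m) · ( −ξ''(s) / [ ξ'(s) − (ξ'(s))^m ]^{2/m} )^{m/(m−2)} ≤ (1 − ξ'(s))^β. -/
open Set Filter Topology Metric

noncomputable section

lemma sq_quarter_le_exp' {x : ℝ} (hx : 0 ≤ x) : x^2/4 ≤ Real.exp x := by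
  have h := Real.add_one_le_exp (x/2)
  have h2 : Real.exp x = Real.exp (x/2) * Real.exp (x/2) := by
    rw [← Real.exp_add]; ring_nf
  nlinarith [Real.exp_pos (x/2)]

lemma one_sub_exp_neg_ge' {g : ℝ} (hg : 0 ≤ g) : g/(1+g) ≤ 1 - Real.exp (-g) := by
  have h := Real.add_one_le_exp g
  have hpos : (0:ℝ) < 1 + g := by linarith
  have h2 : Real.exp (-g) ≤ (1+g)⁻¹ := by
    rw [Real.exp_neg]
    exact inv_anti₀ (by linarith) (by linarith)
  have h3 : g/(1+g) = 1 - (1+g)⁻¹ := by field_simp; ring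
  linarith

lemma third_le_exp_neg_one' : (1:ℝ)/3 ≤ Real.exp (-1) := by
  have he : Real.exp 1 < 2.7182818286 := Real.exp_one_lt_d9
  have hei : Real.exp (-1) = (Real.exp 1)⁻¹ := by rw [Real.exp_neg]
  have hc : Real.exp 1 * (Real.exp 1)⁻¹ = 1 := mul_inv_cancel₀ (ne_of_gt (Real.exp_pos 1))
  nlinarith [Real.exp_pos 1]

set_option maxHeartbeats 1000000 in
lemma key_est' (θ δ s : ℝ) (hθ0 : 0 < θ) (hθ1 : θ < 1) (hδ0 : 0 < δ) (hδ1 : δ ≤ 1)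
    (hδpow : δ ^ (1-θ) ≤ (1-θ)^2/32) (hs : 0 < s) :
    δ * (Real.exp (-s⁻¹) * (1 + s⁻¹)) ≤ (1 - Real.exp (-(δ * (s * Real.exp (-s⁻¹))))) ^ θ := by
  set E : ℝ := Real.exp (-s⁻¹) with hE
  have hE0 : 0 < E := Real.exp_pos _
  have hE1 : E ≤ 1 := Real.exp_le_one_iff.mpr (by simp [inv_nonneg.mpr hs.le])
  set g : ℝ := δ * (s * E) with hg
  have hg0 : 0 < g := by positivity
  have hbase : g/(1+g) ≤ 1 - Real.exp (-g) := one_sub_exp_neg_ge' hg0.le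
  have hδθ : 0 < δ^θ := Real.rpow_pos_of_pos hδ0 θ
  have h8 : δ^(1-θ) ≤ 1/32 := by nlinarith
  have hsplit : δ = δ^(1-θ) * δ^θ := by rw [← Real.rpow_add hδ0]; simp
  rcases le_or_gt 1 s with h1s | h1s
  · have hsinv : s⁻¹ ≤ 1 := by
      rw [inv_le_one_iff₀]; right; exact h1s
    have hEge : (1:ℝ)/3 ≤ E := by
      have h1 : Real.exp (-1) ≤ E := Real.exp_le_exp.mpr (by linarith)
      linarith [third_le_exp_neg_one']
    have hgge : δ/3 ≤ g := by
      have : (1:ℝ)/3 ≤ s * E := by nlinarith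
      nlinarith
    have h14 : δ/4 ≤ 1 - Real.exp (-g) := by
      have : δ/4 ≤ g/(1+g) := by
        rw [div_le_div_iff₀ (by norm_num) (by positivity)]
        nlinarith
      linarith
    have hrhs : (δ/4)^θ ≤ (1 - Real.exp (-g))^θ :=
      Real.rpow_le_rpow (by positivity) h14 hθ0.le
    have hlhs : δ * (E * (1 + s⁻¹)) ≤ 2*δ := by
      have hE2 : E * (1 + s⁻¹) ≤ 2 := by
        nlinarith [mul_nonneg (by linarith : (0:ℝ) ≤ 1-E) (by positivity : (0:ℝ) ≤ 1+s⁻¹)]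
      nlinarith
    have hkey : 2*δ ≤ (δ/4)^θ := by
      have h4 : (δ/4)^θ = δ^θ / 4^θ := Real.div_rpow hδ0.le (by norm_num) θ
      have h4le : (4:ℝ)^θ ≤ 4 := by
        calc (4:ℝ)^θ ≤ 4^(1:ℝ) := Real.rpow_le_rpow_of_exponent_le (by norm_num) hθ1.le
        _ = 4 := Real.rpow_one 4
      have h4pos : (0:ℝ) < 4^θ := Real.rpow_pos_of_pos (by norm_num) θ
      have hmm : δ^(1-θ) * δ^θ ≤ (1/32) * δ^θ := mul_le_mul_of_nonneg_right h8 hδθ.le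
      have h1 : 2*δ ≤ δ^θ/4 := by nlinarith
      calc 2*δ ≤ δ^θ/4 := h1
      _ ≤ δ^θ/4^θ := by
          rw [div_le_div_iff₀ (by norm_num) h4pos]; nlinarith
      _ = (δ/4)^θ := h4.symm
    calc δ * (E * (1 + s⁻¹)) ≤ 2*δ := hlhs
    _ ≤ (δ/4)^θ := hkey
    _ ≤ _ := hrhs
  · have hsinv1 : 1 ≤ s⁻¹ := (one_le_inv_iff₀).mpr ⟨hs, h1s.le⟩
    have hg1 : g ≤ 1 := by
      have hse : s * E ≤ 1 := by nlinarith
      nlinarith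
    have hrg : g/2 ≤ 1 - Real.exp (-g) := by
      have : g/2 ≤ g/(1+g) := by
        rw [div_le_div_iff₀ (by norm_num) (by positivity)]
        nlinarith
      linarith
    have hrhs : (g/2)^θ ≤ (1 - Real.exp (-g))^θ :=
      Real.rpow_le_rpow (by positivity) hrg hθ0.le
    have hu0 : (0:ℝ) < g/2 := by positivity
    have hEexp : E^(1-θ) = Real.exp (-s⁻¹ * (1-θ)) := by
      rw [hE, ← Real.exp_mul]
    have hθ' : (0:ℝ) < 1 - θ := by linarith
    have hEbound : E^(1-θ) ≤ 4*s^2/(1-θ)^2 := by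
      have hx : 0 ≤ (1-θ) * s⁻¹ := by positivity
      have h1 := sq_quarter_le_exp' hx
      have h1' : (1-θ)^2/(4*s^2) ≤ Real.exp ((1-θ)*s⁻¹) := by
        have he : ((1-θ)*s⁻¹)^2/4 = (1-θ)^2/(4*s^2) := by
          field_simp
        linarith [he ▸ h1]
      have hq : (0:ℝ) < (1-θ)^2/(4*s^2) := by positivity
      have h4 := inv_anti₀ hq h1'
      have h5 : ((1-θ)^2/(4*s^2))⁻¹ = 4*s^2/(1-θ)^2 := by
        rw [inv_div]
      have h6 : E^(1-θ) = (Real.exp ((1-θ)*s⁻¹))⁻¹ := by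
        rw [hEexp, ← Real.exp_neg]; ring_nf
      rw [h6]
      calc (Real.exp ((1-θ)*s⁻¹))⁻¹ ≤ ((1-θ)^2/(4*s^2))⁻¹ := h4
      _ = 4*s^2/(1-θ)^2 := h5
    have hgE : g/2 ≤ δ*E := by nlinarith
    have hpowfin : (g/2)^(1-θ) ≤ s^2/8 := by
      have hp1 : (g/2)^(1-θ) ≤ (δ*E)^(1-θ) :=
        Real.rpow_le_rpow hu0.le hgE hθ'.le
      have hp2 : (δ*E)^(1-θ) = δ^(1-θ) * E^(1-θ) := Real.mul_rpow hδ0.le hE0.le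
      have hp3 : δ^(1-θ) * E^(1-θ) ≤ ((1-θ)^2/32) * (4*s^2/(1-θ)^2) := by
        apply mul_le_mul hδpow hEbound (Real.rpow_nonneg hE0.le _) (by positivity)
      have hp4 : ((1-θ)^2/32) * (4*s^2/(1-θ)^2) = s^2/8 := by
        field_simp; ring
      calc (g/2)^(1-θ) ≤ δ^(1-θ) * E^(1-θ) := hp2 ▸ hp1
      _ ≤ s^2/8 := hp4 ▸ hp3
    have hXpos : 0 < (g/2)^(1-θ) := Real.rpow_pos_of_pos hu0 _
    have hmain : 2*δ*E*s⁻¹ ≤ (g/2)^θ := by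
      have hθsub : (g/2)^θ = (g/2)^(1:ℝ) / (g/2)^(1-θ) := by
        rw [← Real.rpow_sub hu0]; norm_num
      rw [hθsub, Real.rpow_one, le_div_iff₀ hXpos]
      have step : 2*δ*E*s⁻¹ * (g/2)^(1-θ) ≤ 2*δ*E*s⁻¹ * (s^2/8) := by
        apply mul_le_mul_of_nonneg_left hpowfin (by positivity)
      have heq : 2*δ*E*s⁻¹*(s^2/8) = δ*(s*E)/4 := by
        field_simp; ring
      have hfin : δ*(s*E)/4 ≤ g/2 := by
        rw [hg]; nlinarith [mul_pos hδ0 (mul_pos hs hE0)]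
      calc 2*δ*E*s⁻¹ * (g/2)^(1-θ) ≤ δ*(s*E)/4 := by rw [← heq]; exact step
      _ ≤ g/2 := hfin
    have hlhs2 : δ*(E*(1+s⁻¹)) ≤ 2*δ*E*s⁻¹ := by
      have h2s : 1+s⁻¹ ≤ 2*s⁻¹ := by linarith
      nlinarith [mul_pos hδ0 hE0]
    calc δ * (E * (1 + s⁻¹)) ≤ 2*δ*E*s⁻¹ := hlhs2
    _ ≤ (g/2)^θ := hmain
    _ ≤ _ := hrhs

set_option maxHeartbeats 1000000 in
lemma reduce_est' (m β a G : ℝ) (hm : 2 < m) (hβ0 : 0 < β) (hβ1 : β < 1)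
    (ha0 : 0 < a) (ha1 : a < 1) (hG0 : 0 < G)
    (hkey : G ≤ (1-a) ^ ((β*(m-2)+2)/m)) :
    ((m-2)/m) * ((G * a) / (a - a^m) ^ (2/m)) ^ (m/(m-2)) ≤ (1-a)^β := by
  have hm0 : (0:ℝ) < m := by linarith
  have hm2 : (0:ℝ) < m - 2 := by linarith
  have h1a : (0:ℝ) < 1 - a := by linarith
  have ham : a^m ≤ a * a := by
    have h1 : a^m = a^(1:ℝ) * a^(m-1) := by
      rw [← Real.rpow_add ha0]; norm_num
    have h2 : a^(m-1) ≤ a^(1:ℝ) := Real.rpow_le_rpow_of_exponent_ge ha0 ha1.le (by linarith)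
    rw [h1, Real.rpow_one] at *
    nlinarith
  have hsub : a * (1-a) ≤ a - a^m := by nlinarith
  have hsubpos : 0 < a - a^m := by nlinarith
  have h2m0 : (0:ℝ) ≤ 2/m := by positivity
  have hden : (a*(1-a))^(2/m) ≤ (a - a^m)^(2/m) :=
    Real.rpow_le_rpow (by positivity) hsub h2m0
  have hdenpos : (0:ℝ) < (a*(1-a))^(2/m) := Real.rpow_pos_of_pos (by positivity) _
  have hdenpos2 : (0:ℝ) < (a - a^m)^(2/m) := Real.rpow_pos_of_pos hsubpos _
  have hnum0 : (0:ℝ) ≤ G * a := by positivity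
  have step3 : (G*a)/(a-a^m)^(2/m) ≤ (G*a)/(a*(1-a))^(2/m) :=
    div_le_div_of_nonneg_left hnum0 hdenpos hden
  set θ : ℝ := (β*(m-2)+2)/m with hθdef
  have hθ2m : θ - 2/m = β*(m-2)/m := by rw [hθdef]; field_simp; ring
  have step4 : (G*a)/(a*(1-a))^(2/m) ≤ (1-a)^(θ - 2/m) := by
    rw [div_le_iff₀ hdenpos]
    have hmr : (a*(1-a))^(2/m) = a^(2/m) * (1-a)^(2/m) := Real.mul_rpow ha0.le h1a.le
    rw [hmr]
    have hrw : (1-a)^(θ-2/m) * (a^(2/m) * (1-a)^(2/m)) = (1-a)^θ * a^(2/m) := by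
      rw [show (1-a)^(θ-2/m) * (a^(2/m) * (1-a)^(2/m)) = ((1-a)^(θ-2/m) * (1-a)^(2/m)) * a^(2/m) by ring,
        ← Real.rpow_add h1a]
      norm_num
    rw [hrw]
    have haa : a ≤ a^(2/m) := by
      calc a = a^(1:ℝ) := (Real.rpow_one a).symm
      _ ≤ a^(2/m) := Real.rpow_le_rpow_of_exponent_ge ha0 ha1.le (by
          rw [div_le_one hm0]; linarith)
    have hGa : G * a ≤ (1-a)^θ * a := mul_le_mul_of_nonneg_right hkey ha0.le
    have h2 : (1-a)^θ * a ≤ (1-a)^θ * a^(2/m) :=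
      mul_le_mul_of_nonneg_left haa (Real.rpow_nonneg h1a.le θ)
    linarith
  have hX : (G*a)/(a-a^m)^(2/m) ≤ (1-a)^(θ-2/m) := le_trans step3 step4
  have hXnn : (0:ℝ) ≤ (G*a)/(a-a^m)^(2/m) := by positivity
  have hmm2 : (0:ℝ) ≤ m/(m-2) := by positivity
  have step5 : ((G*a)/(a-a^m)^(2/m))^(m/(m-2)) ≤ ((1-a)^(θ-2/m))^(m/(m-2)) :=
    Real.rpow_le_rpow hXnn hX hmm2
  have step6 : ((1-a)^(θ-2/m))^(m/(m-2)) = (1-a)^β := by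
    rw [← Real.rpow_mul h1a.le]
    congr 1
    rw [hθ2m]
    field_simp
  have hfrac : (m-2)/m ≤ 1 := by
    rw [div_le_one hm0]; linarith
  have hpownn : (0:ℝ) ≤ ((G*a)/(a-a^m)^(2/m))^(m/(m-2)) := Real.rpow_nonneg hXnn _
  calc ((m-2)/m) * ((G * a) / (a - a^m) ^ (2/m)) ^ (m/(m-2))
      ≤ 1 * ((G * a) / (a - a^m) ^ (2/m)) ^ (m/(m-2)) :=
        mul_le_mul_of_nonneg_right hfrac hpownn
  _ = ((G * a) / (a - a^m) ^ (2/m)) ^ (m/(m-2)) := one_mul _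
  _ ≤ ((1-a)^(θ-2/m))^(m/(m-2)) := step5
  _ = (1-a)^β := step6

set_option maxHeartbeats 1000000 in
theorem statement12 (m β : ℝ) (hm : 2 < m) (hβ : β ∈ Set.Ioo (0:ℝ) 1) :
    ∃ M > (0:ℝ), ∃ ξ : ℝ → ℝ,
      ContDiff ℝ (⊤ : ℕ∞) ξ ∧
      (∀ s ≤ (0:ℝ), ξ s = s) ∧
      (∀ s > (0:ℝ), 0 < deriv ξ s ∧ deriv ξ s < 1 ∧ deriv (deriv ξ) s < 0) ∧
      StrictMono ξ ∧
      Tendsto ξ atTop (𝓝 M) ∧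
      (∀ s > (0:ℝ),
        ((m - 2) / m) *
          (-(deriv (deriv ξ) s) /
            (deriv ξ s - (deriv ξ s) ^ m) ^ (2 / m)) ^ (m / (m - 2))
          ≤ (1 - deriv ξ s) ^ β) := by
  obtain ⟨hβ0, hβ1⟩ := hβ
  have hm0 : (0:ℝ) < m := by linarith
  have hm2 : (0:ℝ) < m - 2 := by linarith
  set θ : ℝ := (β*(m-2)+2)/m with hθdef
  have hθ0 : 0 < θ := by
    apply div_pos _ hm0; nlinarith
  have hθ1 : θ < 1 := by
    rw [hθdef, div_lt_one hm0]; nlinarith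
  have h1θ : (0:ℝ) < 1-θ := by linarith
  set δ : ℝ := ((1-θ)^2/32) ^ ((1-θ)⁻¹) with hδdef
  have hbase : (0:ℝ) < (1-θ)^2/32 := by positivity
  have hbase1 : (1-θ)^2/32 ≤ 1 := by nlinarith
  have hδ0 : 0 < δ := Real.rpow_pos_of_pos hbase _
  have hδpow : δ ^ (1-θ) = (1-θ)^2/32 := by
    rw [hδdef, ← Real.rpow_mul hbase.le, inv_mul_cancel₀ (ne_of_gt h1θ), Real.rpow_one]
  have hδ1 : δ ≤ 1 := Real.rpow_le_one hbase.le hbase1 (by positivity)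
  -- the function
  set g : ℝ → ℝ := fun s => δ * (s * expNegInvGlue s) with hgdef
  set p : ℝ → ℝ := fun s => Real.exp (-(g s)) with hpdef
  have hgsmooth : ContDiff ℝ (⊤:ℕ∞) g :=
    contDiff_const.mul (contDiff_id.mul expNegInvGlue.contDiff)
  have hpsmooth : ContDiff ℝ (⊤:ℕ∞) p := (hgsmooth.neg).exp
  have hpcont : Continuous p := hpsmooth.continuous
  have hppos : ∀ s, 0 < p s := fun s => Real.exp_pos _
  have hgnonneg : ∀ s, 0 ≤ g s := by
    intro s
    rcases le_or_gt s 0 with h|h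
    · simp [hgdef, expNegInvGlue.zero_of_nonpos h]
    · exact mul_nonneg hδ0.le (mul_nonneg h.le (expNegInvGlue.nonneg s))
  have hple1 : ∀ s, p s ≤ 1 := fun s =>
    Real.exp_le_one_iff.mpr (by linarith [hgnonneg s])
  have hgpos : ∀ s > (0:ℝ), 0 < g s := fun s hs =>
    mul_pos hδ0 (mul_pos hs (expNegInvGlue.pos_of_pos hs))
  have hplt1 : ∀ s > (0:ℝ), p s < 1 := fun s hs =>
    Real.exp_lt_one_iff.mpr (by linarith [hgpos s hs])
  have hglue : ∀ s > (0:ℝ), expNegInvGlue s = Real.exp (-s⁻¹) := by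
    intro s hs; simp [expNegInvGlue, not_le.mpr hs]
  set ξ : ℝ → ℝ := fun s => ∫ t in (0:ℝ)..s, p t with hξdef
  have hξd : ∀ s, HasDerivAt ξ (p s) s := fun s =>
    intervalIntegral.integral_hasDerivAt_right (hpcont.intervalIntegrable _ _)
      (hpcont.stronglyMeasurableAtFilter _ _) hpcont.continuousAt
  have hderiv : deriv ξ = p := funext fun s => (hξd s).deriv
  -- derivative of g on the right half line
  have hgderiv : ∀ s > (0:ℝ),
      HasDerivAt g (δ * (Real.exp (-s⁻¹) * (1 + s⁻¹))) s := by
    intro s hs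
    have heq : (fun x : ℝ => δ * (x * Real.exp (-x⁻¹))) =ᶠ[nhds s] g := by
      filter_upwards [Ioi_mem_nhds hs] with x hx
      rw [hgdef]
      simp only [hglue x hx]
    have h2 : HasDerivAt (fun x : ℝ => Real.exp (-x⁻¹)) (Real.exp (-s⁻¹) * (s^2)⁻¹) s := by
      simpa using ((hasDerivAt_inv (ne_of_gt hs)).neg).exp
    have h3 : HasDerivAt (fun x : ℝ => x * Real.exp (-x⁻¹))
        (1 * Real.exp (-s⁻¹) + s * (Real.exp (-s⁻¹) * (s^2)⁻¹)) s :=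
      (hasDerivAt_id s).mul h2
    have h4 := h3.const_mul δ
    have h5 : δ * (1 * Real.exp (-s⁻¹) + s * (Real.exp (-s⁻¹) * (s^2)⁻¹))
        = δ * (Real.exp (-s⁻¹) * (1 + s⁻¹)) := by
      field_simp
    rw [h5] at h4
    exact h4.congr_of_eventuallyEq heq.symm
  have hGpos : ∀ s > (0:ℝ), 0 < δ * (Real.exp (-s⁻¹) * (1 + s⁻¹)) := by
    intro s hs
    have := Real.exp_pos (-s⁻¹)
    have := inv_pos.mpr hs
    positivity
  have hpderiv : ∀ s > (0:ℝ),
      HasDerivAt p (-(δ * (Real.exp (-s⁻¹) * (1 + s⁻¹))) * p s) s := by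
    intro s hs
    have h := ((hgderiv s hs).neg).exp
    have : Real.exp (-(g s)) * -(δ * (Real.exp (-s⁻¹) * (1 + s⁻¹)))
        = -(δ * (Real.exp (-s⁻¹) * (1 + s⁻¹))) * p s := by
      rw [hpdef]; ring
    rw [← this]
    exact h
  have hd2 : ∀ s > (0:ℝ),
      deriv (deriv ξ) s = -(δ * (Real.exp (-s⁻¹) * (1 + s⁻¹))) * p s := by
    intro s hs
    rw [hderiv]
    exact (hpderiv s hs).deriv
  -- integrability
  have hint : MeasureTheory.IntegrableOn p (Ioi (0:ℝ)) := by
    have h01 : MeasureTheory.IntegrableOn p (Ioc (0:ℝ) 1) := hpcont.integrableOn_Ioc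
    have h1i : MeasureTheory.IntegrableOn p (Ioi (1:ℝ)) := by
      have hcomp : MeasureTheory.IntegrableOn (fun x : ℝ => Real.exp (-(δ/3) * x)) (Ioi (1:ℝ)) :=
        exp_neg_integrableOn_Ioi 1 (by positivity)
      apply MeasureTheory.Integrable.mono hcomp hpcont.aestronglyMeasurable.restrict
      apply (MeasureTheory.ae_restrict_iff' measurableSet_Ioi).mpr
      apply MeasureTheory.ae_of_all
      intro x hx
      have hx1 : (1:ℝ) ≤ x := le_of_lt hx
      have hx0 : (0:ℝ) < x := by linarith
      rw [Real.norm_eq_abs, Real.norm_eq_abs, abs_of_pos (hppos x), abs_of_pos (Real.exp_pos _)]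
      apply Real.exp_le_exp.mpr
      have hE : (1:ℝ)/3 ≤ expNegInvGlue x := by
        rw [hglue x hx0]
        calc (1:ℝ)/3 ≤ Real.exp (-1) := third_le_exp_neg_one'
        _ ≤ Real.exp (-x⁻¹) := Real.exp_le_exp.mpr (by
            have : x⁻¹ ≤ 1 := by rw [inv_le_one_iff₀]; right; exact hx1
            linarith)
      have : (δ/3) * x ≤ g x := by
        simp only [hgdef]
        nlinarith [mul_nonneg (mul_nonneg hδ0.le (by linarith : (0:ℝ) ≤ x))
          (by linarith : (0:ℝ) ≤ expNegInvGlue x - 1/3)]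
      linarith
    rw [show Ioi (0:ℝ) = Ioc 0 1 ∪ Ioi 1 from (Ioc_union_Ioi_eq_Ioi (by norm_num)).symm]
    exact h01.union h1i
  set M : ℝ := ∫ x in Ioi (0:ℝ), p x with hMdef
  have htend : Tendsto ξ atTop (𝓝 M) :=
    MeasureTheory.intervalIntegral_tendsto_integral_Ioi 0 hint tendsto_id
  have hmono : StrictMono ξ :=
    strictMono_of_deriv_pos (fun x => by rw [hderiv]; exact hppos x)
  have hξ0 : ξ 0 = 0 := intervalIntegral.integral_same
  have hM0 : 0 < M := by
    have h1 : ξ 0 < ξ 1 := hmono one_pos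
    have h2 : ξ 1 ≤ M := by
      apply ge_of_tendsto htend
      filter_upwards [eventually_ge_atTop (1:ℝ)] with x hx
      exact hmono.monotone hx
    linarith
  have hid : ∀ s ≤ (0:ℝ), ξ s = s := by
    intro s hs
    have hone : ∀ t ∈ Set.uIcc (0:ℝ) s, p t = 1 := by
      intro t ht
      rcases Set.mem_uIcc.mp ht with h | h
      · have : t ≤ 0 := le_trans h.2 hs
        rw [hpdef]
        simp [hgdef, expNegInvGlue.zero_of_nonpos this]
      · have : t ≤ 0 := h.2
        rw [hpdef]
        simp [hgdef, expNegInvGlue.zero_of_nonpos this]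
    calc ξ s = ∫ t in (0:ℝ)..s, (1:ℝ) := intervalIntegral.integral_congr hone
    _ = s := by simp
  have hsmooth : ContDiff ℝ (⊤:ℕ∞) ξ := by
    rw [show ((⊤:ℕ∞) : WithTop ℕ∞) = (⊤:ℕ∞) from rfl]
    rw [contDiff_infty_iff_deriv]
    exact ⟨fun x => (hξd x).differentiableAt, by rw [hderiv]; exact hpsmooth⟩
  refine ⟨M, hM0, ξ, hsmooth, hid, ?_, hmono, htend, ?_⟩
  · intro s hs
    rw [hd2 s hs, hderiv]
    refine ⟨hppos s, hplt1 s hs, ?_⟩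
    have h1 := hGpos s hs
    have h2 := hppos s
    nlinarith
  · intro s hs
    rw [hd2 s hs, hderiv, neg_mul, neg_neg]
    apply reduce_est' m β (p s) (δ * (Real.exp (-s⁻¹) * (1 + s⁻¹))) hm hβ0 hβ1
      (hppos s) (hplt1 s hs) (hGpos s hs)
    have hk := key_est' θ δ s hθ0 hθ1 hδ0 hδ1 (le_of_eq hδpow) hs
    have hps : p s = Real.exp (-(δ * (s * Real.exp (-s⁻¹)))) := by
      rw [hpdef, hgdef]
      simp only [hglue s hs]
    rw [← hps] at hk
    exact hk
end
end
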